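/- Let X be a Banach space, k ∈ ℕ, and (x_s)_{s∈[ℕ]^k} a bounded k-sequence in X. Let M be an infinite subset of ℕ such that (x_s)_{s∈[M]^k} generates (with respect to some null sequence of positive reals) a k-spreading model (e_n)_n which is Cesàro summable to zero, i.e. ‖(1/n) Σ_{j=1}^n e_j‖_* → 0 as n → ∞. Then for every infinite subset L of M, the k-subsequence (x_s)_{s∈[L]^k} is k-Cesàro summable to zero. -/

import Mathlib

/-- `s : Fin k → ℕ` is the increasing enumeration of a `k`-element subset of `M`. -/
def IsEnum (M : Set ℕ) {k : ℕ} (s : Fin k → ℕ) : Prop :=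
  StrictMono s ∧ ∀ i, s i ∈ M

/-- `(p j)_{j=1,…,l}` is a plegma family in `[M]^k`. -/
def IsPlegma (M : Set ℕ) {k l : ℕ} (p : Fin l → Fin k → ℕ) : Prop :=
  (∀ j, IsEnum M (p j)) ∧
  (∀ i : Fin k, StrictMono fun j : Fin l => p j i) ∧
  (∀ (i : Fin k) (hi : (i : ℕ) + 1 < k) (j j' : Fin l), p j i < p j' ⟨(i : ℕ) + 1, hi⟩)


/-- A null sequence of positive reals. -/
def IsNullPos (δ : ℕ → ℝ) : Prop :=
  (∀ n, 0 < δ n) ∧ Filter.Tendsto δ Filter.atTop (nhds 0)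

/-- The sequence `(e n)` is spreading with respect to the seminorm `ρ`:
`ρ (∑ a_i • e_i) = ρ (∑ a_i • e_{k_i})` for all strictly increasing `(k_i)`. -/
def IsSpreadingWith {E : Type*} [AddCommGroup E] [Module ℝ E]
    (ρ : Seminorm ℝ E) (e : ℕ → E) : Prop :=
  ∀ (n : ℕ) (a : Fin n → ℝ) (f : Fin n → ℕ), StrictMono f →
    ρ (∑ i, a i • e (i : ℕ)) = ρ (∑ i, a i • e (f i))

/-- The `k`-subsequence `(x_s)_{s ∈ [M]^k}` generates `(e n)` (in the seminormed space
`(E, ρ)`) as a `k`-spreading model with respect to the null sequence `δ`: for all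
`m ≤ l` (0-indexed), every plegma family `(p j)_{j=0}^{m}` in `[M]^k` whose first (hence
every) entry is `≥ M l`, and all coefficients in `[-1,1]`,
`| ‖∑ a_j • x_{p j}‖ - ρ (∑ a_j • e_j) | ≤ δ l`. The infinite set `M` is represented by
its increasing enumeration. -/
def Generates {X : Type*} [SeminormedAddCommGroup X] [NormedSpace ℝ X]
    {E : Type*} [AddCommGroup E] [Module ℝ E] (ρ : Seminorm ℝ E)
    {k : ℕ} (x : (Fin k → ℕ) → X) (M : ℕ → ℕ) (e : ℕ → E) (δ : ℕ → ℝ) : Prop :=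
  ∀ m l : ℕ, m ≤ l → ∀ p : Fin (m + 1) → Fin k → ℕ,
    IsPlegma (Set.range M) p →
    (∀ (j : Fin (m + 1)) (i : Fin k), M l ≤ p j i) →
    ∀ a : Fin (m + 1) → ℝ, (∀ j, a j ∈ Set.Icc (-1 : ℝ) 1) →
      |‖∑ j, a j • x (p j)‖ - ρ (∑ j, a j • e (j : ℕ))| ≤ δ l


/-- The (enumerations of the) `k`-element subsets of the finite set `F ⊆ ℕ`. -/
def kSubsetEnums (k : ℕ) (F : Finset ℕ) : Finset (Fin k → ℕ) :=
  (Fintype.piFinset fun _ : Fin k => F).filter fun s => ∀ i j : Fin k, i < j → s i < s j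

/-- `(x s)_{s ∈ [M]^k}` is `k`-Cesàro summable to `x₀`:
`(n choose k)⁻¹ • ∑_{s ∈ [M|n]^k} x s → x₀` in norm, where `M|n` consists of the first
`n` elements of `M`. -/
def KCesaroSummableTo {X : Type*} [SeminormedAddCommGroup X] [NormedSpace ℝ X]
    {k : ℕ} (M : ℕ → ℕ) (x : (Fin k → ℕ) → X) (x₀ : X) : Prop :=
  Filter.Tendsto
    (fun n => (n.choose k : ℝ)⁻¹ •
      ∑ s ∈ kSubsetEnums k ((Finset.range n).image M), x s)
    Filter.atTop (nhds x₀)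

/-! ### Auxiliary material for the proof of Statement 17 -/

section Aux

set_option linter.unusedSectionVars false

open Finset

lemma mem_kSubsetEnums {k : ℕ} {F : Finset ℕ} {c : Fin k → ℕ} :
    c ∈ kSubsetEnums k F ↔ (∀ i, c i ∈ F) ∧ StrictMono c := by
  constructor
  · rintro h
    rw [kSubsetEnums, Finset.mem_filter, Fintype.mem_piFinset] at h
    exact ⟨h.1, fun i j hij => h.2 i j hij⟩
  · rintro ⟨h1, h2⟩
    rw [kSubsetEnums, Finset.mem_filter, Fintype.mem_piFinset]
    exact ⟨h1, fun i j hij => h2 hij⟩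

lemma card_kSubsetEnums_le {k : ℕ} (F : Finset ℕ) :
    (kSubsetEnums k F).card ≤ F.card.choose k := by
  rw [← Finset.card_powersetCard]
  apply Finset.card_le_card_of_injOn (fun c => Finset.image c Finset.univ)
  · intro c hc
    rw [Finset.mem_coe, mem_kSubsetEnums] at hc
    rw [Finset.mem_coe, Finset.mem_powersetCard]
    refine ⟨fun y hy => ?_, ?_⟩
    · rcases Finset.mem_image.1 hy with ⟨i, _, rfl⟩; exact hc.1 i
    · rw [Finset.card_image_of_injective _ hc.2.injective, Finset.card_univ, Fintype.card_fin]
  · intro c hc c' hc' h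
    rw [Finset.mem_coe, mem_kSubsetEnums] at hc hc'
    have h1 : (Finset.image c Finset.univ).card = k := by
      rw [Finset.card_image_of_injective _ hc.2.injective, Finset.card_univ, Fintype.card_fin]
    have e1 := Finset.orderEmbOfFin_unique h1 (f := c)
      (fun i => Finset.mem_image_of_mem _ (Finset.mem_univ i)) hc.2
    have e2 := Finset.orderEmbOfFin_unique h1 (f := c')
      (fun i => by simpa using congrArg (fun (S : Finset ℕ) => c' i ∈ S) h |>.mpr (Finset.mem_image_of_mem _ (Finset.mem_univ i))) hc'.2
    rw [e1, e2]

lemma sum_kSubsetEnums_image {X : Type*} [AddCommMonoid X] {k n : ℕ}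
    (L : ℕ → ℕ) (hL : StrictMono L) (f : (Fin k → ℕ) → X) :
    ∑ s ∈ kSubsetEnums k ((Finset.range n).image L), f s
      = ∑ c ∈ kSubsetEnums k (Finset.range n), f (fun i => L (c i)) := by
  symm
  apply Finset.sum_bij (fun c _ => fun i => L (c i))
  · intro c hc
    rw [mem_kSubsetEnums] at hc ⊢
    exact ⟨fun i => Finset.mem_image_of_mem _ (hc.1 i), hL.comp hc.2⟩
  · intro c hc c' hc' h
    funext i
    exact hL.injective (congrFun h i)
  · intro s hs
    rw [mem_kSubsetEnums] at hs
    have h1 : ∀ i, ∃ a, a ∈ Finset.range n ∧ L a = s i := by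
      intro i; exact Finset.mem_image.1 (hs.1 i)
    choose c hc1 hc2 using h1
    refine ⟨c, ?_, ?_⟩
    · rw [mem_kSubsetEnums]
      refine ⟨hc1, fun i j hij => ?_⟩
      have := hs.2 hij
      rw [← hc2 i, ← hc2 j] at this
      exact hL.lt_iff_lt.1 this
    · funext i; rw [hc2 i]
  · intro c hc; rfl

/-- all consecutive gaps of `c` are at least `m` -/
def GapGE {k : ℕ} (m : ℕ) (c : Fin k → ℕ) : Prop :=
  ∀ i j : Fin k, (j : ℕ) = (i : ℕ) + 1 → c i + m ≤ c j

instance {k m : ℕ} : DecidablePred (GapGE (k := k) m) := fun _ => by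
  unfold GapGE; infer_instance

lemma gapGE_shift {k m t : ℕ} {b : Fin k → ℕ} :
    GapGE m (fun i => b i + t) ↔ GapGE m b := by
  constructor
  · intro h i j hji
    have := h i j hji
    simp only at this
    omega
  · intro h i j hji
    have := h i j hji
    simp only
    omega

variable {k : ℕ} [NeZero k]

def lst : Fin k := ⟨k - 1, Nat.sub_lt (NeZero.pos k) one_pos⟩

lemma le_lst (i : Fin k) : i ≤ (lst : Fin k) := by
  rw [Fin.le_def]; have := i.isLt; simp [lst]; omega

lemma reparam {X : Type*} [AddCommMonoid X] (n : ℕ) (f : (Fin k → ℕ) → X) :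
    ∑ c ∈ kSubsetEnums k (Finset.range n), f c
      = ∑ b ∈ (kSubsetEnums k (Finset.range n)).filter (fun b => b 0 = 0),
          ∑ t ∈ Finset.range (n - b lst), f (fun i => b i + t) := by
  rw [Finset.sum_sigma']
  refine Finset.sum_bij'
    (i := fun (c : Fin k → ℕ) (_ : c ∈ kSubsetEnums k (Finset.range n)) =>
      (⟨fun i => c i - c 0, c 0⟩ : Σ _ : Fin k → ℕ, ℕ))
    (j := fun (p : Σ _ : Fin k → ℕ, ℕ) _ => fun i => p.1 i + p.2)
    ?hi ?hj ?left ?right ?h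
  case hj =>
    intro p hp
    simp only [Finset.mem_sigma, Finset.mem_filter, mem_kSubsetEnums, Finset.mem_range] at hp
    obtain ⟨⟨⟨hmem, hmono⟩, hb0⟩, ht⟩ := hp
    rw [mem_kSubsetEnums]
    constructor
    · intro i
      rw [Finset.mem_range]
      show p.1 i + p.2 < n
      have h1 : p.1 i ≤ p.1 lst := hmono.monotone (le_lst i)
      omega
    · intro a b hab
      exact Nat.add_lt_add_right (hmono hab) _
  case hi =>
    intro c hc
    rw [mem_kSubsetEnums] at hc
    obtain ⟨hmem, hmono⟩ := hc
    have h0 : ∀ i, c 0 ≤ c i := fun i => hmono.monotone (Fin.zero_le i)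
    have hlt : ∀ i, c i < n := fun i => Finset.mem_range.1 (hmem i)
    simp only [Finset.mem_sigma, Finset.mem_filter, mem_kSubsetEnums, Finset.mem_range]
    refine ⟨⟨⟨fun i => ?_, fun a b hab => ?_⟩, by simp⟩, ?_⟩
    · have := hlt i; omega
    · show c a - c 0 < c b - c 0
      have := hmono hab
      have := h0 a
      omega
    · have := hlt lst
      have := h0 lst
      omega
  case left =>
    intro c hc
    rw [mem_kSubsetEnums] at hc
    funext i
    show c i - c 0 + c 0 = c i
    have : c 0 ≤ c i := hc.2.monotone (Fin.zero_le i)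
    omega
  case right =>
    intro p hp
    simp only [Finset.mem_sigma, Finset.mem_filter, mem_kSubsetEnums, Finset.mem_range] at hp
    obtain ⟨⟨⟨hmem, hmono⟩, hb0⟩, ht⟩ := hp
    have key : ∀ i, p.1 i + p.2 - (p.1 0 + p.2) = p.1 i := by
      intro i
      have : p.1 0 ≤ p.1 i := hmono.monotone (Fin.zero_le i)
      omega
    refine Sigma.ext ?_ ?_
    · funext i
      show p.1 i + p.2 - (p.1 0 + p.2) = p.1 i
      exact key i
    · show HEq (p.1 0 + p.2) p.2
      rw [hb0]
      simp
  case h =>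
    intro c hc
    rw [mem_kSubsetEnums] at hc
    have h0 : ∀ i, c 0 ≤ c i := fun i => hc.2.monotone (Fin.zero_le i)
    exact congrArg f (funext fun i => (Nat.sub_add_cancel (h0 i)).symm)

lemma prod_ite_card (i1 : Fin k) (n : ℕ) :
    (∏ j : Fin k, if j = i1 then 1 else n) = n ^ (k - 1) := by
  rw [← Finset.mul_prod_erase Finset.univ _ (Finset.mem_univ i1), if_pos rfl, one_mul]
  rw [Finset.prod_congr rfl (fun j hj => if_neg (Finset.ne_of_mem_erase hj)),
    Finset.prod_const, Finset.card_erase_of_mem (Finset.mem_univ i1), Finset.card_univ,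
    Fintype.card_fin]

lemma card_base_le (n : ℕ) :
    ((kSubsetEnums k (Finset.range n)).filter (fun b => b 0 = 0)).card ≤ n ^ (k - 1) := by
  calc ((kSubsetEnums k (Finset.range n)).filter (fun b => b 0 = 0)).card
      ≤ (Fintype.piFinset
          (fun j : Fin k => if j = 0 then Finset.range 1 else Finset.range n)).card := by
        apply Finset.card_le_card
        intro b hb
        rw [Finset.mem_filter, mem_kSubsetEnums] at hb
        rw [Fintype.mem_piFinset]
        intro j
        by_cases hj : j = 0
        · subst hj; rw [if_pos rfl, hb.2, Finset.mem_range]; exact one_pos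
        · rw [if_neg hj]; exact hb.1.1 j
    _ = ∏ j : Fin k, (if j = 0 then Finset.range 1 else Finset.range n).card :=
        Fintype.card_piFinset _
    _ = ∏ j : Fin k, if j = (0 : Fin k) then 1 else n := by
        apply Finset.prod_congr rfl; intro j _; split <;> simp
    _ = n ^ (k - 1) := prod_ite_card 0 n

lemma card_bad_le (n m : ℕ) :
    ((kSubsetEnums k (Finset.range n)).filter (fun c => ¬ GapGE m c)).card
      ≤ k * (m * n ^ (k - 1)) := by
  have hsub : ((kSubsetEnums k (Finset.range n)).filter (fun c => ¬ GapGE m c))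
      ⊆ (Finset.univ : Finset (Fin k)).biUnion (fun i =>
        (kSubsetEnums k (Finset.range n)).filter
          (fun c => ∃ j : Fin k, (j : ℕ) = (i : ℕ) + 1 ∧ c j < c i + m)) := by
    intro c hc
    rw [Finset.mem_filter] at hc
    rw [GapGE] at hc
    push_neg at hc
    obtain ⟨i, j, hji, hlt⟩ := hc.2
    rw [Finset.mem_biUnion]
    exact ⟨i, Finset.mem_univ i, Finset.mem_filter.2 ⟨hc.1, j, hji, by omega⟩⟩
  refine (Finset.card_le_card hsub).trans ((Finset.card_biUnion_le).trans ?_)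
  have hone : ∀ i : Fin k,
      ((kSubsetEnums k (Finset.range n)).filter
        (fun c => ∃ j : Fin k, (j : ℕ) = (i : ℕ) + 1 ∧ c j < c i + m)).card
      ≤ m * n ^ (k - 1) := by
    intro i
    by_cases hik : (i : ℕ) + 1 < k
    · set i1 : Fin k := ⟨(i : ℕ) + 1, hik⟩ with hi1
      have hne : i ≠ i1 := by
        intro h; apply absurd (congrArg Fin.val h); simp [hi1]
      have hcard : m * n ^ (k - 1) =
          ((Finset.range m) ×ˢ Fintype.piFinset
            (fun j : Fin k => if j = i1 then Finset.range 1 else Finset.range n)).card := by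
        rw [Finset.card_product, Finset.card_range, Fintype.card_piFinset]
        congr 1
        rw [← prod_ite_card i1 n]
        apply Finset.prod_congr rfl
        intro j _; split <;> simp
      rw [hcard]
      apply Finset.card_le_card_of_injOn
        (fun c => (c i1 - c i, fun j => if j = i1 then 0 else c j))
      · intro c hc
        rw [Finset.mem_coe, Finset.mem_filter, mem_kSubsetEnums] at hc
        obtain ⟨⟨hmem, hmono⟩, j, hji, hlt⟩ := hc
        have hj : j = i1 := Fin.ext (by simp [hi1, hji])
        subst hj
        have hii1 : i < i1 := by rw [Fin.lt_def]; simp [hi1]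
        have h2 : c i < c i1 := hmono hii1
        rw [Finset.mem_coe, Finset.mem_product]
        constructor
        · rw [Finset.mem_range]; show c i1 - c i < m; omega
        · rw [Fintype.mem_piFinset]
          intro j'
          show (if j' = i1 then 0 else c j') ∈ (if j' = i1 then Finset.range 1 else Finset.range n)
          by_cases hj' : j' = i1
          · simp [hj']
          · rw [if_neg hj', if_neg hj']; exact hmem j'
      · intro c hc c' hc' heq
        rw [Finset.mem_coe, Finset.mem_filter, mem_kSubsetEnums] at hc hc'
        obtain ⟨⟨hmem, hmono⟩, j, hji, hlt⟩ := hc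
        obtain ⟨⟨hmem', hmono'⟩, j', hji', hlt'⟩ := hc'
        have h1 : c i1 - c i = c' i1 - c' i := congrArg Prod.fst heq
        have h2 : ∀ j'', j'' ≠ i1 → c j'' = c' j'' := by
          intro j'' hj''
          have h3 : (if j'' = i1 then 0 else c j'') = (if j'' = i1 then 0 else c' j'') :=
            congrFun (congrArg Prod.snd heq) j''
          rwa [if_neg hj'', if_neg hj''] at h3
        have hii1 : i < i1 := by rw [Fin.lt_def]; simp [hi1]
        have hci : c i = c' i := h2 i hne
        have hlt1 : c i < c i1 := hmono hii1
        have hlt2 : c' i < c' i1 := hmono' hii1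
        funext j''
        by_cases hj'' : j'' = i1
        · subst hj''; omega
        · exact h2 j'' hj''
    · rw [Finset.filter_false_of_mem, Finset.card_empty]
      · exact Nat.zero_le _
      · intro c _
        rintro ⟨j, hji, -⟩
        exact absurd (hji ▸ j.isLt) (by omega)
  calc ∑ i : Fin k, ((kSubsetEnums k (Finset.range n)).filter
        (fun c => ∃ j : Fin k, (j : ℕ) = (i : ℕ) + 1 ∧ c j < c i + m)).card
      ≤ ∑ _i : Fin k, m * n ^ (k - 1) := Finset.sum_le_sum (fun i _ => hone i)
    _ = k * (m * n ^ (k - 1)) := by rw [Finset.sum_const, Finset.card_univ, Fintype.card_fin,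
        smul_eq_mul]

lemma sum_len (n : ℕ) :
    ∑ b ∈ (kSubsetEnums k (Finset.range n)).filter (fun b => b 0 = 0), (n - b lst)
      = (kSubsetEnums k (Finset.range n)).card := by
  have h := (reparam (k := k) n (fun _ => (1 : ℕ))).symm
  simpa using h

set_option maxHeartbeats 1000000 in
lemma sum_bad (n m : ℕ) :
    ∑ b ∈ (kSubsetEnums k (Finset.range n)).filter (fun b => b 0 = 0),
        (if GapGE m b then 0 else (n - b lst))
      = ((kSubsetEnums k (Finset.range n)).filter (fun c => ¬ GapGE m c)).card := by
  calc ∑ b ∈ (kSubsetEnums k (Finset.range n)).filter (fun b => b 0 = 0),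
        (if GapGE m b then 0 else (n - b lst))
      = ∑ b ∈ (kSubsetEnums k (Finset.range n)).filter (fun b => b 0 = 0),
          ∑ t ∈ Finset.range (n - b lst), (if GapGE m (fun i => b i + t) then 0 else 1) := by
        apply Finset.sum_congr rfl
        intro b _
        by_cases hg : GapGE m b
        · rw [if_pos hg]
          symm
          apply Finset.sum_eq_zero
          intro t _
          rw [if_pos (gapGE_shift.2 hg)]
        · rw [if_neg hg, Finset.sum_congr rfl
            (fun t _ => if_neg (fun hh => hg (gapGE_shift.1 hh)))]
          simp
    _ = ∑ c ∈ kSubsetEnums k (Finset.range n), (if GapGE m c then 0 else 1) :=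
        (reparam (k := k) n (fun c => if GapGE m c then 0 else 1)).symm
    _ = ((kSubsetEnums k (Finset.range n)).filter (fun c => ¬ GapGE m c)).card := by
        rw [Finset.card_filter]
        apply Finset.sum_congr rfl
        intro c _
        by_cases hg : GapGE m c <;> simp [hg]

lemma block_est {X : Type*} [NormedAddCommGroup X] [NormedSpace ℝ X]
    {E : Type*} [AddCommGroup E] [Module ℝ E] (ρ : Seminorm ℝ E)
    (x : (Fin k → ℕ) → X) (M : ℕ → ℕ) (e : ℕ → E) (δ : ℕ → ℝ)
    (hgen : Generates ρ x M e δ) (hM : StrictMono M)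
    (L : ℕ → ℕ) (hL : StrictMono L) (hLM : ∀ t, M t ≤ L t)
    (hrange : Set.range L ⊆ Set.range M)
    {m' l q : ℕ} (hml : m' ≤ l) (hlq : l ≤ q) (b : Fin k → ℕ) (hb : StrictMono b)
    (hgap : GapGE (m' + 1) b) :
    ‖∑ r ∈ Finset.range (m' + 1), x (fun i => L (b i + (q * (m' + 1) + r)))‖
      ≤ ρ (∑ j ∈ Finset.range (m' + 1), e j) + δ l := by
  have hplegma : IsPlegma (Set.range M)
      (fun (j : Fin (m' + 1)) (i : Fin k) => L (b i + (q * (m' + 1) + (j : ℕ)))) := by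
    refine ⟨fun j => ⟨fun i i' hii' => hL ?_, fun i => hrange (Set.mem_range_self _)⟩,
      fun i j j' hjj' => hL ?_, fun i hi j j' => hL ?_⟩
    · exact Nat.add_lt_add_right (hb hii') _
    · have : (j : ℕ) < (j' : ℕ) := hjj'
      omega
    · have h1 : b i + (m' + 1) ≤ b ⟨(i : ℕ) + 1, hi⟩ := hgap i ⟨(i : ℕ) + 1, hi⟩ rfl
      have h2 : (j : ℕ) < m' + 1 := j.isLt
      omega
  have hge : ∀ (j : Fin (m' + 1)) (i : Fin k),
      M l ≤ L (b i + (q * (m' + 1) + (j : ℕ))) := by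
    intro j i
    refine le_trans ?_ (hLM _)
    apply hM.monotone
    calc l ≤ q := hlq
      _ = q * 1 := (mul_one q).symm
      _ ≤ q * (m' + 1) := Nat.mul_le_mul_left q (by omega)
      _ ≤ b i + (q * (m' + 1) + (j : ℕ)) := by omega
  have h := hgen m' l hml _ hplegma hge (fun _ => 1)
    (fun j => ⟨by norm_num, by norm_num⟩)
  simp only [one_smul] at h
  have e1 : ∑ j : Fin (m' + 1), x (fun i => L (b i + (q * (m' + 1) + (j : ℕ))))
      = ∑ r ∈ Finset.range (m' + 1), x (fun i => L (b i + (q * (m' + 1) + r))) :=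
    Fin.sum_univ_eq_sum_range (fun r => x (fun i => L (b i + (q * (m' + 1) + r)))) (m' + 1)
  have e2 : ∑ j : Fin (m' + 1), e (j : ℕ) = ∑ j ∈ Finset.range (m' + 1), e j :=
    Fin.sum_univ_eq_sum_range e (m' + 1)
  rw [e1, e2] at h
  have := abs_le.1 h
  linarith [this.1, this.2]

lemma sum_blocks {X : Type*} [AddCommMonoid X] (v : ℕ → X) (Q m : ℕ) :
    ∑ t ∈ Finset.range (Q * m), v t
      = ∑ q ∈ Finset.range Q, ∑ r ∈ Finset.range m, v (q * m + r) := by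
  induction Q with
  | zero => simp
  | succ Q ih =>
    rw [Finset.sum_range_succ, ← ih, Nat.succ_mul, Finset.sum_range_add]

lemma line_est {X : Type*} [NormedAddCommGroup X] [NormedSpace ℝ X]
    {E : Type*} [AddCommGroup E] [Module ℝ E] (ρ : Seminorm ℝ E)
    (x : (Fin k → ℕ) → X) (M : ℕ → ℕ) (e : ℕ → E) (δ : ℕ → ℝ)
    (hgen : Generates ρ x M e δ) (hM : StrictMono M)
    (L : ℕ → ℕ) (hL : StrictMono L) (hLM : ∀ t, M t ≤ L t)
    (hrange : Set.range L ⊆ Set.range M)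
    {C : ℝ} (hC0 : 0 ≤ C) (hC : ∀ s, ‖x s‖ ≤ C)
    {m' l : ℕ} (hml : m' ≤ l) (hδl : 0 ≤ δ l) (b : Fin k → ℕ) (hb : StrictMono b)
    (hgap : GapGE (m' + 1) b) (N : ℕ) :
    ‖∑ t ∈ Finset.range N, x (fun i => L (b i + t))‖
      ≤ (↑(N / (m' + 1)) : ℝ) * (ρ (∑ j ∈ Finset.range (m' + 1), e j) + δ l)
        + (↑(l * (m' + 1) + (m' + 1)) : ℝ) * C := by
  set m : ℕ := m' + 1 with hmdef
  set Q : ℕ := N / m with hQdef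
  set B : ℝ := ρ (∑ j ∈ Finset.range m, e j) + δ l with hBdef
  have hB0 : 0 ≤ B := add_nonneg (apply_nonneg ρ _) hδl
  set v : ℕ → X := fun t => x (fun i => L (b i + t)) with hvdef
  have hQm : Q * m ≤ N := Nat.div_mul_le_self N m
  have hsplit : ∑ t ∈ Finset.range N, v t
      = ∑ t ∈ Finset.range (Q * m), v t + ∑ t ∈ Finset.Ico (Q * m) N, v t :=
    (Finset.sum_range_add_sum_Ico v hQm).symm
  have htail : ‖∑ t ∈ Finset.Ico (Q * m) N, v t‖ ≤ (m : ℝ) * C := by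
    refine le_trans (norm_sum_le _ _) ?_
    calc ∑ t ∈ Finset.Ico (Q * m) N, ‖v t‖ ≤ ∑ _t ∈ Finset.Ico (Q * m) N, C :=
          Finset.sum_le_sum (fun t _ => hC _)
      _ = ((N - Q * m : ℕ) : ℝ) * C := by rw [Finset.sum_const, Nat.card_Ico, nsmul_eq_mul]
      _ ≤ (m : ℝ) * C := by
          apply mul_le_mul_of_nonneg_right _ hC0
          have h1 := Nat.div_add_mod N m
          have h2 : N % m < m := Nat.mod_lt _ (by omega)
          have h3 : m * (N / m) = Q * m := by rw [hQdef, mul_comm]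
          exact_mod_cast (by omega : N - Q * m ≤ m)
  have hmain : ‖∑ t ∈ Finset.range (Q * m), v t‖
      ≤ (Q : ℝ) * B + (l : ℝ) * ((m : ℝ) * C) := by
    rw [sum_blocks v Q m]
    refine le_trans (norm_sum_le _ _) ?_
    have hpt : ∀ q ∈ Finset.range Q, ‖∑ r ∈ Finset.range m, v (q * m + r)‖
        ≤ B + (if q < l then (m : ℝ) * C else 0) := by
      intro q _
      by_cases hql : l ≤ q
      · rw [if_neg (by omega)]
        have := block_est ρ x M e δ hgen hM L hL hLM hrange hml hql b hb hgap
        simp only [hvdef]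
        calc ‖∑ r ∈ Finset.range m, x (fun i => L (b i + (q * m + r)))‖
            ≤ ρ (∑ j ∈ Finset.range m, e j) + δ l := this
          _ ≤ B + 0 := by rw [hBdef, add_zero]
      · rw [if_pos (by omega)]
        have h1 : ‖∑ r ∈ Finset.range m, v (q * m + r)‖ ≤ (m : ℝ) * C := by
          refine le_trans (norm_sum_le _ _) ?_
          calc ∑ r ∈ Finset.range m, ‖v (q * m + r)‖ ≤ ∑ _r ∈ Finset.range m, C :=
                Finset.sum_le_sum (fun r _ => hC _)
            _ = (m : ℝ) * C := by rw [Finset.sum_const, Finset.card_range, nsmul_eq_mul]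
        linarith
    refine le_trans (Finset.sum_le_sum hpt) ?_
    rw [Finset.sum_add_distrib, Finset.sum_const, Finset.card_range, nsmul_eq_mul]
    have hite : ∑ q ∈ Finset.range Q, (if q < l then (m : ℝ) * C else 0)
        ≤ (l : ℝ) * ((m : ℝ) * C) := by
      rw [← Finset.sum_filter]
      rw [Finset.sum_const, nsmul_eq_mul]
      have hcard : ((Finset.range Q).filter (fun q => q < l)).card ≤ l := by
        refine le_trans (Finset.card_le_card (fun q hq => ?_)) (le_of_eq (Finset.card_range l))
        rw [Finset.mem_range]
        exact (Finset.mem_filter.1 hq).2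
      apply mul_le_mul_of_nonneg_right _ (by positivity)
      exact_mod_cast hcard
    linarith
  calc ‖∑ t ∈ Finset.range N, v t‖
      ≤ ‖∑ t ∈ Finset.range (Q * m), v t‖ + ‖∑ t ∈ Finset.Ico (Q * m) N, v t‖ := by
        rw [hsplit]; exact norm_add_le _ _
    _ ≤ (Q : ℝ) * B + (l : ℝ) * ((m : ℝ) * C) + (m : ℝ) * C := by linarith
    _ ≤ (Q : ℝ) * B + (↑(l * (m' + 1) + (m' + 1)) : ℝ) * C := by
        push_cast [hmdef]
        ring_nf
        linarith

lemma choose_lower (k : ℕ) (hk : 0 < k) (D : ℝ) :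
    ∀ᶠ n : ℕ in Filter.atTop, D * (n : ℝ) ^ (k - 1) ≤ (n.choose k : ℝ) := by
  by_cases hD0 : D ≤ 0
  · filter_upwards with n
    have : D * (n : ℝ) ^ (k - 1) ≤ 0 :=
      mul_nonpos_of_nonpos_of_nonneg hD0 (pow_nonneg (Nat.cast_nonneg n) _)
    exact le_trans this (Nat.cast_nonneg _)
  push_neg at hD0
  filter_upwards [Filter.eventually_ge_atTop (2 * k),
    Filter.eventually_ge_atTop (⌈D * (2 ^ k * (Nat.factorial k : ℝ))⌉₊)] with n h1 h2
  have hnat : n ^ k ≤ 2 ^ k * (Nat.factorial k * n.choose k) := by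
    calc n ^ k ≤ (2 * (n + 1 - k)) ^ k := Nat.pow_le_pow_left (by omega) k
      _ = 2 ^ k * (n + 1 - k) ^ k := mul_pow 2 _ k
      _ ≤ 2 ^ k * n.descFactorial k :=
          Nat.mul_le_mul_left _ (Nat.pow_sub_le_descFactorial n k)
      _ = 2 ^ k * (Nat.factorial k * n.choose k) := by
          rw [Nat.descFactorial_eq_factorial_mul_choose]
  set P : ℝ := 2 ^ k * (Nat.factorial k : ℝ) with hPdef
  have hP : 0 < P := by positivity
  have hreal : (n : ℝ) * (n : ℝ) ^ (k - 1) ≤ P * (n.choose k : ℝ) := by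
    have hn : (n : ℝ) ^ k = (n : ℝ) * (n : ℝ) ^ (k - 1) := by
      conv_lhs => rw [show k = (k - 1) + 1 by omega]
      rw [pow_succ]; ring
    rw [← hn, hPdef, mul_assoc]
    exact_mod_cast hnat
  have hDn : D * P ≤ (n : ℝ) := by
    have := Nat.le_ceil (D * P)
    have h2' : ((⌈D * P⌉₊ : ℕ) : ℝ) ≤ (n : ℝ) := Nat.cast_le.2 h2
    linarith
  rw [← mul_le_mul_iff_of_pos_right hP]
  calc D * (n : ℝ) ^ (k - 1) * P = (D * P) * (n : ℝ) ^ (k - 1) := by ring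
    _ ≤ (n : ℝ) * (n : ℝ) ^ (k - 1) :=
        mul_le_mul_of_nonneg_right hDn (pow_nonneg (Nat.cast_nonneg n) _)
    _ ≤ P * (n.choose k : ℝ) := hreal
    _ = (n.choose k : ℝ) * P := mul_comm _ _

end Aux

/-- If a bounded `k`-sequence `(x s)` in a Banach space generates on
`[M]^k` a `k`-spreading model `(e n)` which is Cesàro summable to zero, then for every
infinite `L ⊆ M` the `k`-subsequence `(x s)_{s ∈ [L]^k}` is `k`-Cesàro summable to
zero. -/
theorem statement17 {X : Type*} [NormedAddCommGroup X] [NormedSpace ℝ X] [CompleteSpace X]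
    (k : ℕ) (hk : 0 < k) (x : (Fin k → ℕ) → X)
    (hbdd : ∃ C > 0, ∀ s : Fin k → ℕ, ‖x s‖ ≤ C)
    (M : ℕ → ℕ) (hM : StrictMono M)
    {E : Type*} [AddCommGroup E] [Module ℝ E] (ρ : Seminorm ℝ E) (e : ℕ → E)
    (δ : ℕ → ℝ) (hδ : IsNullPos δ) (hspr : IsSpreadingWith ρ e)
    (hgen : Generates ρ x M e δ)
    (hces : Filter.Tendsto (fun n : ℕ => ρ ((n : ℝ)⁻¹ • ∑ j ∈ Finset.range n, e j))
      Filter.atTop (nhds 0)) :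
    ∀ L : ℕ → ℕ, StrictMono L → Set.range L ⊆ Set.range M →
      KCesaroSummableTo L x 0 := by
  intro L hL hLsub
  haveI : NeZero k := ⟨hk.ne'⟩
  obtain ⟨C, hC0, hC⟩ := hbdd
  have hLM : ∀ t, M t ≤ L t := by
    have hex : ∀ t, ∃ u, M u = L t := fun t => hLsub (Set.mem_range_self t)
    choose σ hσ using hex
    have hσm : StrictMono σ := by
      intro a b hab
      apply hM.lt_iff_lt.1
      rw [hσ a, hσ b]
      exact hL hab
    intro t
    calc M t ≤ M (σ t) := hM.monotone hσm.le_apply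
      _ = L t := hσ t
  rw [KCesaroSummableTo]
  rw [NormedAddCommGroup.tendsto_nhds_zero]
  intro ε hε
  set ε' : ℝ := ε / 8 with hε'def
  have hε' : 0 < ε' := by positivity
  obtain ⟨m, hm1, hmρ⟩ : ∃ m : ℕ, 1 ≤ m ∧ ρ ((m : ℝ)⁻¹ • ∑ j ∈ Finset.range m, e j) < ε' :=
    ((Filter.eventually_ge_atTop 1).and (hces.eventually (gt_mem_nhds hε'))).exists
  obtain ⟨m', rfl⟩ : ∃ m', m = m' + 1 := ⟨m - 1, by omega⟩
  have hmpos : (0 : ℝ) < ((m' + 1 : ℕ) : ℝ) := by positivity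
  have hρm : ρ (∑ j ∈ Finset.range (m' + 1), e j) ≤ ((m' + 1 : ℕ) : ℝ) * ε' := by
    have h1 : ρ (∑ j ∈ Finset.range (m' + 1), e j)
        = ((m' + 1 : ℕ) : ℝ) * ρ (((m' + 1 : ℕ) : ℝ)⁻¹ • ∑ j ∈ Finset.range (m' + 1), e j) := by
      rw [map_smul_eq_mul, norm_inv, Real.norm_natCast]
      field_simp
    rw [h1]
    have := hmρ
    nlinarith [apply_nonneg ρ (((m' + 1 : ℕ) : ℝ)⁻¹ • ∑ j ∈ Finset.range (m' + 1), e j)]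
  obtain ⟨l, hlm, hδl⟩ : ∃ l, m' + 1 ≤ l ∧ δ l < ε' :=
    ((Filter.eventually_ge_atTop (m' + 1)).and (hδ.2.eventually (gt_mem_nhds hε'))).exists
  set B : ℝ := ρ (∑ j ∈ Finset.range (m' + 1), e j) + δ l with hBdef
  have hB0 : 0 ≤ B := add_nonneg (apply_nonneg ρ _) (hδ.1 l).le
  have hBle : B ≤ ((m' + 1 : ℕ) : ℝ) * ε' + ε' := by
    rw [hBdef]
    have := hδl
    linarith
  set Kc : ℕ := l * (m' + 1) + (m' + 1) + k * (m' + 1) with hKcdef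
  have key : ∀ n : ℕ, ‖∑ s ∈ kSubsetEnums k ((Finset.range n).image L), x s‖
      ≤ 2 * ε' * (n.choose k : ℝ) + C * (Kc : ℝ) * (n : ℝ) ^ (k - 1) := by
    intro n
    rw [sum_kSubsetEnums_image L hL x]
    rw [reparam (k := k) n (fun c => x (fun i => L (c i)))]
    refine le_trans (norm_sum_le _ _) ?_
    have hpt : ∀ b ∈ (kSubsetEnums k (Finset.range n)).filter (fun b => b 0 = 0),
        ‖∑ t ∈ Finset.range (n - b lst), x (fun i => L (b i + t))‖
          ≤ ((n - b lst : ℕ) : ℝ) * (2 * ε') + ((l * (m' + 1) + (m' + 1) : ℕ) : ℝ) * C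
            + (if GapGE (m' + 1) b then 0 else ((n - b lst : ℕ) : ℝ) * C) := by
      intro b hb
      have hbmono : StrictMono b := (mem_kSubsetEnums.1 (Finset.mem_filter.1 hb).1).2
      set N : ℕ := n - b lst with hNdef
      by_cases hg : GapGE (m' + 1) b
      · rw [if_pos hg, add_zero]
        refine le_trans (line_est ρ x M e δ hgen hM L hL hLM hLsub hC0.le hC
          (by omega) (hδ.1 l).le b hbmono hg N) ?_
        have hq1 : (N / (m' + 1)) * (m' + 1) ≤ N := Nat.div_mul_le_self N (m' + 1)
        have hq2 : N / (m' + 1) ≤ N := Nat.div_le_self N (m' + 1)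
        have hQB : ((N / (m' + 1) : ℕ) : ℝ) * B ≤ (N : ℝ) * (2 * ε') := by
          have h1 : ((N / (m' + 1) : ℕ) : ℝ) * B
              ≤ ((N / (m' + 1) : ℕ) : ℝ) * (((m' + 1 : ℕ) : ℝ) * ε' + ε') :=
            mul_le_mul_of_nonneg_left hBle (Nat.cast_nonneg _)
          have h2 : ((N / (m' + 1) : ℕ) : ℝ) * ((m' + 1 : ℕ) : ℝ) ≤ (N : ℝ) := by
            exact_mod_cast hq1
          have h3 : ((N / (m' + 1) : ℕ) : ℝ) ≤ (N : ℝ) := by exact_mod_cast hq2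
          nlinarith [hε'.le]
        rw [hBdef] at hQB
        linarith
      · rw [if_neg hg]
        have h1 : ‖∑ t ∈ Finset.range N, x (fun i => L (b i + t))‖ ≤ (N : ℝ) * C := by
          refine le_trans (norm_sum_le _ _) ?_
          calc ∑ t ∈ Finset.range N, ‖x (fun i => L (b i + t))‖
              ≤ ∑ _t ∈ Finset.range N, C := Finset.sum_le_sum (fun t _ => hC _)
            _ = (N : ℝ) * C := by rw [Finset.sum_const, Finset.card_range, nsmul_eq_mul]
        have h2 : 0 ≤ (N : ℝ) * (2 * ε') := by positivity
        have h3 : 0 ≤ ((l * (m' + 1) + (m' + 1) : ℕ) : ℝ) * C := by positivity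
        linarith
    refine le_trans (Finset.sum_le_sum hpt) ?_
    rw [Finset.sum_add_distrib, Finset.sum_add_distrib]
    have hs1 : ∑ b ∈ (kSubsetEnums k (Finset.range n)).filter (fun b => b 0 = 0),
        ((n - b lst : ℕ) : ℝ) * (2 * ε') ≤ 2 * ε' * (n.choose k : ℝ) := by
      rw [← Finset.sum_mul]
      have hcast : ∑ b ∈ (kSubsetEnums k (Finset.range n)).filter (fun b => b 0 = 0),
          ((n - b lst : ℕ) : ℝ)
          = ((∑ b ∈ (kSubsetEnums k (Finset.range n)).filter (fun b => b 0 = 0),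
              (n - b lst) : ℕ) : ℝ) := by
        rw [Nat.cast_sum]
      rw [hcast, sum_len]
      have hcard : (kSubsetEnums k (Finset.range n)).card ≤ n.choose k := by
        have := card_kSubsetEnums_le (k := k) (Finset.range n)
        rwa [Finset.card_range] at this
      have : ((kSubsetEnums k (Finset.range n)).card : ℝ) ≤ (n.choose k : ℝ) := by
        exact_mod_cast hcard
      nlinarith [hε'.le]
    have hs2 : ∑ _b ∈ (kSubsetEnums k (Finset.range n)).filter (fun b => b 0 = 0),
        ((l * (m' + 1) + (m' + 1) : ℕ) : ℝ) * C
        ≤ ((l * (m' + 1) + (m' + 1) : ℕ) : ℝ) * C * (n : ℝ) ^ (k - 1) := by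
      rw [Finset.sum_const, nsmul_eq_mul]
      have hcard : (((kSubsetEnums k (Finset.range n)).filter (fun b => b 0 = 0)).card : ℝ)
          ≤ (n : ℝ) ^ (k - 1) := by
        have := card_base_le (k := k) n
        exact_mod_cast this
      have hpos : 0 ≤ ((l * (m' + 1) + (m' + 1) : ℕ) : ℝ) * C := by positivity
      nlinarith
    have hs3 : ∑ b ∈ (kSubsetEnums k (Finset.range n)).filter (fun b => b 0 = 0),
        (if GapGE (m' + 1) b then 0 else ((n - b lst : ℕ) : ℝ) * C)
        ≤ C * ((k * ((m' + 1) * n ^ (k - 1)) : ℕ) : ℝ) := by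
      have hcast : ∑ b ∈ (kSubsetEnums k (Finset.range n)).filter (fun b => b 0 = 0),
          (if GapGE (m' + 1) b then 0 else ((n - b lst : ℕ) : ℝ) * C)
          = C * ((∑ b ∈ (kSubsetEnums k (Finset.range n)).filter (fun b => b 0 = 0),
              (if GapGE (m' + 1) b then 0 else (n - b lst)) : ℕ) : ℝ) := by
        rw [Nat.cast_sum, Finset.mul_sum]
        apply Finset.sum_congr rfl
        intro b _
        by_cases hg : GapGE (m' + 1) b
        · rw [if_pos hg, if_pos hg]; simp
        · rw [if_neg hg, if_neg hg]; ring
      rw [hcast, sum_bad]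
      have hbad : (((kSubsetEnums k (Finset.range n)).filter
          (fun c => ¬ GapGE (m' + 1) c)).card : ℝ)
          ≤ ((k * ((m' + 1) * n ^ (k - 1)) : ℕ) : ℝ) := by
        exact_mod_cast card_bad_le (k := k) n (m' + 1)
      nlinarith
    have hfin : ((l * (m' + 1) + (m' + 1) : ℕ) : ℝ) * C * (n : ℝ) ^ (k - 1)
        + C * ((k * ((m' + 1) * n ^ (k - 1)) : ℕ) : ℝ)
        = C * (Kc : ℝ) * (n : ℝ) ^ (k - 1) := by
      rw [hKcdef]
      push_cast
      ring
    linarith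
  filter_upwards [choose_lower k hk (C * (Kc : ℝ) * 4 / ε), Filter.eventually_ge_atTop k]
    with n hn1 hn2
  have hpos : (0 : ℝ) < (n.choose k : ℝ) := by
    exact_mod_cast Nat.choose_pos hn2
  rw [norm_smul, Real.norm_eq_abs, abs_of_nonneg (by positivity)]
  have h1 : (n.choose k : ℝ)⁻¹ * ‖∑ s ∈ kSubsetEnums k ((Finset.range n).image L), x s‖
      ≤ (n.choose k : ℝ)⁻¹ * (2 * ε' * (n.choose k : ℝ) + C * (Kc : ℝ) * (n : ℝ) ^ (k - 1)) :=
    mul_le_mul_of_nonneg_left (key n) (by positivity)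
  have h2 : C * (Kc : ℝ) * (n : ℝ) ^ (k - 1) ≤ ε / 4 * (n.choose k : ℝ) := by
    have h5 := mul_le_mul_of_nonneg_left hn1 (by positivity : (0 : ℝ) ≤ ε / 4)
    calc C * (Kc : ℝ) * (n : ℝ) ^ (k - 1)
        = ε / 4 * (C * (Kc : ℝ) * 4 / ε * (n : ℝ) ^ (k - 1)) := by
          field_simp
      _ ≤ ε / 4 * (n.choose k : ℝ) := h5
  have h3 : (n.choose k : ℝ)⁻¹ * (2 * ε' * (n.choose k : ℝ) + C * (Kc : ℝ) * (n : ℝ) ^ (k - 1))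
      ≤ 2 * ε' + ε / 4 := by
    have hinv : 0 ≤ (n.choose k : ℝ)⁻¹ := by positivity
    have hexp : (n.choose k : ℝ)⁻¹ * (2 * ε' * (n.choose k : ℝ)) = 2 * ε' := by
      field_simp
    have h6 : (n.choose k : ℝ)⁻¹ * (C * (Kc : ℝ) * (n : ℝ) ^ (k - 1))
        ≤ (n.choose k : ℝ)⁻¹ * (ε / 4 * (n.choose k : ℝ)) :=
      mul_le_mul_of_nonneg_left h2 hinv
    have hexp2 : (n.choose k : ℝ)⁻¹ * (ε / 4 * (n.choose k : ℝ)) = ε / 4 := by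
      field_simp
    rw [mul_add, hexp]
    rw [hexp2] at h6
    linarith
  calc (n.choose k : ℝ)⁻¹ * ‖∑ s ∈ kSubsetEnums k ((Finset.range n).image L), x s‖
      ≤ 2 * ε' + ε / 4 := le_trans h1 h3
    _ < ε := by rw [hε'def]; linarith
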